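/- arXiv:2204.02370 — 5 statements merged into one kernel-verified Lean document; each statement's English description precedes it below -/
import Mathlib

section
/- For all natural numbers N ≥ 2 and a with 1 ≤ a < N, the smallest x_min such that the sequence a^x mod N is periodic from x_min onward satisfies x_min ≤ log₂ N. -/
theorem xmin_le_log2 (N a : ℕ) (hN : 2 ≤ N) (ha : 1 ≤ a) (haN : a < N) :
    ∃ r > 0, ∃ xmin : ℕ, xmin ≤ Nat.log 2 N ∧
      ∀ x ≥ xmin, a ^ (x + r) % N = a ^ x % N := by
  have hN0 : N ≠ 0 := by omega
  set L := Nat.log 2 N with hL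
  set g := Nat.gcd (a ^ L) N with hg
  have hgN : g ∣ N := Nat.gcd_dvd_right _ _
  have hga : g ∣ a ^ L := Nat.gcd_dvd_left _ _
  set v := N / g with hv
  have hgv : g * v = N := Nat.mul_div_cancel' hgN
  have hvpos : 0 < v := by
    rcases Nat.eq_zero_or_pos v with h | h
    · rw [h, mul_zero] at hgv; omega
    · exact h
  -- Coprime a v
  have hcav : Nat.Coprime a v := by
    rw [Nat.coprime_iff_gcd_eq_one]
    by_contra hne
    obtain ⟨p, hp, hpd⟩ := Nat.exists_prime_and_dvd hne
    have hpa : p ∣ a := hpd.trans (Nat.gcd_dvd_left _ _)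
    have hpv : p ∣ v := hpd.trans (Nat.gcd_dvd_right _ _)
    set e := N.factorization p with he
    have hpeN : p ^ e ∣ N := Nat.ordProj_dvd N p
    have heL : e ≤ L := by
      have h2e : 2 ^ e ≤ N := le_trans (Nat.pow_le_pow_left hp.two_le e)
        (Nat.le_of_dvd (by omega) hpeN)
      exact (Nat.le_log_iff_pow_le (by norm_num) hN0).mpr h2e
    have hpea : p ^ e ∣ a ^ L :=
      dvd_trans (pow_dvd_pow_of_dvd hpa e) (pow_dvd_pow a heL)
    have hpeg : p ^ e ∣ g := Nat.dvd_gcd hpea hpeN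
    have : p ^ (e + 1) ∣ N := by
      rw [← hgv, pow_succ]
      exact mul_dvd_mul hpeg hpv
    exact Nat.pow_succ_factorization_not_dvd hN0 hp this
  -- Coprime g v
  have hcgv : Nat.Coprime g v := Nat.Coprime.coprime_dvd_left hga (hcav.pow_left L)
  refine ⟨v.totient, Nat.totient_pos.mpr hvpos, L, le_refl _, ?_⟩
  -- key step: a^(L + r) ≡ a^L [MOD N]
  have hkey : a ^ (L + v.totient) ≡ a ^ L [MOD N] := by
    have hmodv : a ^ (L + v.totient) ≡ a ^ L [MOD v] := by
      have h1 : a ^ v.totient ≡ 1 [MOD v] := Nat.ModEq.pow_totient hcav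
      calc a ^ (L + v.totient) = a ^ L * a ^ v.totient := by rw [pow_add]
        _ ≡ a ^ L * 1 [MOD v] := Nat.ModEq.mul_left _ h1
        _ = a ^ L := by ring
    have hmodg : a ^ (L + v.totient) ≡ a ^ L [MOD g] := by
      have h1 : g ∣ a ^ (L + v.totient) := hga.trans (pow_dvd_pow a (Nat.le_add_right _ _))
      exact ((Nat.modEq_zero_iff_dvd).mpr h1).trans ((Nat.modEq_zero_iff_dvd).mpr hga).symm
    have := (Nat.modEq_and_modEq_iff_modEq_mul hcgv).mp ⟨hmodg, hmodv⟩
    rwa [hgv] at this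
  intro x hx
  obtain ⟨k, rfl⟩ := Nat.exists_eq_add_of_le hx
  have : a ^ (L + k + v.totient) ≡ a ^ (L + k) [MOD N] := by
    calc a ^ (L + k + v.totient) = a ^ k * a ^ (L + v.totient) := by ring
      _ ≡ a ^ k * a ^ L [MOD N] := Nat.ModEq.mul_left _ hkey
      _ = a ^ (L + k) := by ring
  exact this
end

section
/- For 0 ≤ x ≤ 2, one has arccos(1 − x) ≤ √(2x) + x. -/
theorem arccos_one_sub_le (x : ℝ) (hx0 : 0 ≤ x) (hx2 : x ≤ 2) :
    Real.arccos (1 - x) ≤ Real.sqrt (2 * x) + x := by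
  set s : ℝ := Real.sqrt (2 * x) with hs
  have hs0 : 0 ≤ s := Real.sqrt_nonneg _
  have hs2 : s ^ 2 = 2 * x := Real.sq_sqrt (by linarith)
  have hpi := Real.pi_gt_d6
  have hpi' := Real.pi_lt_d2
  set t : ℝ := s + x with ht
  have ht0 : 0 ≤ t := by positivity
  rcases le_or_gt Real.pi t with hcase | hcase
  · exact (Real.arccos_le_pi _).trans hcase
  -- Now t < π; it suffices to show cos t ≤ 1 - x
  have key : Real.cos t ≤ 1 - x := by
    rcases le_or_gt (Real.pi - 2) s with hbig | hsmall
    · -- Jordan-type bound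
      have h1 : Real.cos t ≤ 1 - 2 / Real.pi ^ 2 * t ^ 2 :=
        Real.cos_le_one_sub_mul_cos_sq (by rw [abs_of_nonneg ht0]; linarith)
      have h2 : x ≤ 2 / Real.pi ^ 2 * t ^ 2 := by
        rw [div_mul_eq_mul_div, le_div_iff₀ (by positivity)]
        -- need x * π² ≤ 2 t², t = s + s²/2, s ≥ π - 2
        have hx' : x = s ^ 2 / 2 := by linarith
        rw [hx', show t = s + s ^ 2 / 2 from by rw [ht]; linarith]
        nlinarith [mul_nonneg (mul_nonneg (sq_nonneg s) (sub_nonneg.2 hbig))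
          (show (0:ℝ) ≤ s + 2 + Real.pi by positivity)]
      linarith
    · -- Taylor bound on sin (t/2)
      have hx' : x = s ^ 2 / 2 := by linarith
      have hts : t = s + s ^ 2 / 2 := by rw [ht]; linarith
      have hs1 : s ≤ 6 / 5 := by linarith
      have hu0 : 0 ≤ t / 2 := by linarith
      have hu45 : t / 2 ≤ 4 / 5 * s := by
        nlinarith [mul_nonneg hs0 (sub_nonneg.2 hs1)]
      have hub : t / 2 ≤ 24 / 25 := le_trans hu45 (by linarith)
      have hu1 : t / 2 ≤ 1 := by linarith
      have hu2 : (t / 2) ^ 2 ≤ 16 / 25 * s ^ 2 := by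
        nlinarith [pow_le_pow_left₀ hu0 hu45 2]
      have h3 : (t / 2) ^ 3 ≤ 24 / 25 * (t / 2) ^ 2 := by
        nlinarith [sq_nonneg (t / 2)]
      have h4 : (t / 2) ^ 4 ≤ (24 / 25) ^ 2 * (t / 2) ^ 2 := by
        nlinarith [pow_nonneg hu0 3, sq_nonneg (t / 2)]
      have hb := Real.sin_bound (x := t / 2) (by rw [abs_of_nonneg hu0]; linarith)
      rw [abs_of_nonneg hu0] at hb
      have hlow : t / 2 - (t / 2) ^ 3 / 6 - (t / 2) ^ 4 * (5 / 96) ≤ Real.sin (t / 2) := by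
        have := abs_le.mp hb
        linarith [this.1, mul_le_mul_of_nonneg_left hu1 (pow_nonneg hu0 4)]
      have hhalf : s / 2 ≤ Real.sin (t / 2) := by
        refine le_trans ?_ hlow
        have hdiff : t / 2 - s / 2 = s ^ 2 / 4 := by rw [hts]; ring
        linarith [h3, h4, hu2, hdiff]
      have hsq : x / 2 ≤ Real.sin (t / 2) ^ 2 := by
        have h2 : (s / 2) ^ 2 ≤ Real.sin (t / 2) ^ 2 :=
          pow_le_pow_left₀ (by positivity) hhalf 2
        have : (s/2)^2 = x/2 := by rw [hx']; ring
        linarith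
      have hid : Real.sin (t / 2) ^ 2 = 1 / 2 - Real.cos (2 * (t / 2)) / 2 :=
        Real.sin_sq_eq_half_sub _
      rw [show 2 * (t / 2) = t by ring] at hid
      linarith
  -- conclude via antitonicity of arccos
  have h1x : Real.arccos (1 - x) ≤ Real.arccos (Real.cos t) := by
    rw [Real.arccos_eq_pi_div_two_sub_arcsin, Real.arccos_eq_pi_div_two_sub_arcsin]
    have := Real.monotone_arcsin key
    linarith
  rw [Real.arccos_cos ht0 hcase.le] at h1x
  exact h1x
end

section
/- For 0 ≤ x ≤ 2, one has arccos(1 − x) ≥ √x. -/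
theorem arccos_one_sub_ge (x : ℝ) (hx0 : 0 ≤ x) (hx2 : x ≤ 2) :
    Real.arccos (1 - x) ≥ Real.sqrt x := by
  have hs0 : 0 ≤ Real.sqrt x := Real.sqrt_nonneg x
  have hsπ : Real.sqrt x ≤ Real.pi := by
    calc Real.sqrt x ≤ Real.sqrt 2 := Real.sqrt_le_sqrt hx2
    _ ≤ 2 := by
        nlinarith [Real.sq_sqrt (by norm_num : (0:ℝ) ≤ 2), Real.sqrt_nonneg 2]
    _ ≤ Real.pi := by linarith [Real.pi_gt_three]
  have hcos : 1 - x ≤ Real.cos (Real.sqrt x) := by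
    have h := Real.one_sub_sq_div_two_le_cos (x := Real.sqrt x)
    rw [Real.sq_sqrt hx0] at h
    linarith
  have key : Real.arccos (Real.cos (Real.sqrt x)) ≤ Real.arccos (1 - x) := by
    rw [Real.arccos, Real.arccos]
    have := Real.monotone_arcsin hcos
    linarith
  rwa [Real.arccos_cos hs0 hsπ] at key
end

section
/- Polynomial bound on the number of samples in the classical Grover simulation: for every polynomial t(n) there exists n₀ such that for all n ≥ n₀, with p = sin²((2t(n)+1)·arcsin(2^{−n/2})) < 1 and N = ⌈log(1−p)/log(1−2^{−n})⌉, one has N ≤ 8(2t(n)+1)² + 1. -/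
open Filter Real

/-- Every `ℕ`-polynomial is bounded by `C * (n+1)^d`. -/
lemma nat_poly_bound (P : Polynomial ℕ) : ∃ C d : ℕ, ∀ n, P.eval n ≤ C * (n + 1) ^ d := by
  induction P using Polynomial.induction_on' with
  | add p q hp hq =>
    obtain ⟨C, d, h⟩ := hp
    obtain ⟨C', d', h'⟩ := hq
    refine ⟨C + C', max d d', fun n => ?_⟩
    have h1 : C * (n + 1) ^ d ≤ C * (n + 1) ^ max d d' :=
      Nat.mul_le_mul_left _ (Nat.pow_le_pow_right (Nat.succ_pos n) (le_max_left _ _))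
    have h2 : C' * (n + 1) ^ d' ≤ C' * (n + 1) ^ max d d' :=
      Nat.mul_le_mul_left _ (Nat.pow_le_pow_right (Nat.succ_pos n) (le_max_right _ _))
    simp only [Polynomial.eval_add]
    calc p.eval n + q.eval n ≤ C * (n + 1) ^ max d d' + C' * (n + 1) ^ max d d' := by
          exact Nat.add_le_add (le_trans (h n) h1) (le_trans (h' n) h2)
      _ = (C + C') * (n + 1) ^ max d d' := by ring
  | monomial k c =>
    refine ⟨c, k, fun n => ?_⟩
    simp only [Polynomial.eval_monomial]
    exact Nat.mul_le_mul_left _ (Nat.pow_le_pow_left (Nat.le_succ n) k)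

/-- Eventually `C * (n+1)^d ≤ 2^n`. -/
lemma nat_poly_eventually_le_two_pow (C d : ℕ) :
    ∃ n₀ : ℕ, ∀ n ≥ n₀, C * (n + 1) ^ d ≤ 2 ^ n := by
  have h := tendsto_pow_const_mul_const_pow_of_lt_one d
    (by norm_num : (0:ℝ) ≤ 1/2) (by norm_num : (1:ℝ)/2 < 1)
  have h2 : Tendsto (fun n : ℕ => (2 * C : ℝ) * ((((n+1) : ℕ):ℝ) ^ d * (1/2) ^ (n+1)))
      atTop (nhds 0) := by
    simpa using (h.comp (tendsto_add_atTop_nat 1)).const_mul (2 * C : ℝ)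
  have h3 := h2.eventually_lt_const (by norm_num : (0:ℝ) < 1)
  obtain ⟨n₀, hn₀⟩ := h3.exists_forall_of_atTop
  refine ⟨n₀, fun n hn => ?_⟩
  have hlt := hn₀ n hn
  have key : (C : ℝ) * ((n:ℝ) + 1) ^ d ≤ 2 ^ n := by
    have hpow : (0:ℝ) < (1/2 : ℝ) ^ (n+1) := by positivity
    have : (2 * C : ℝ) * ((((n+1) : ℕ):ℝ) ^ d * (1/2) ^ (n+1)) =
        ((C : ℝ) * ((n:ℝ) + 1) ^ d) * ((1/2) ^ n) := by
      push_cast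
      ring
    rw [this] at hlt
    have h2n : (0:ℝ) < (2:ℝ) ^ n := by positivity
    have hhalf : ((1:ℝ)/2) ^ n = ((2:ℝ) ^ n)⁻¹ := by
      rw [one_div, inv_pow]
    rw [hhalf] at hlt
    calc (C : ℝ) * ((n:ℝ) + 1) ^ d
        = ((C : ℝ) * ((n:ℝ) + 1) ^ d) * ((2:ℝ)^n)⁻¹ * (2:ℝ)^n := by
          field_simp
      _ ≤ 1 * (2:ℝ)^n := by
          exact mul_le_mul_of_nonneg_right hlt.le h2n.le
      _ = (2:ℝ)^n := one_mul _
  have : ((C * (n + 1) ^ d : ℕ) : ℝ) ≤ ((2 ^ n : ℕ) : ℝ) := by push_cast; exact key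
  exact_mod_cast this

set_option maxHeartbeats 1000000 in
theorem grover_sample_count_poly_bound (t : ℕ → ℕ) (P : Polynomial ℕ)
    (hP : ∀ n, t n = P.eval n) :
    ∃ n₀ : ℕ, ∀ n ≥ n₀,
      (Real.sin (((2 * t n + 1 : ℕ) : ℝ) *
          Real.arcsin ((2 : ℝ) ^ (-(n : ℝ) / 2)))) ^ 2 < 1 →
      (⌈Real.log (1 - (Real.sin (((2 * t n + 1 : ℕ) : ℝ) *
            Real.arcsin ((2 : ℝ) ^ (-(n : ℝ) / 2)))) ^ 2) /
          Real.log (1 - (2 : ℝ) ^ (-(n : ℝ)))⌉₊ : ℕ) ≤ 8 * (2 * t n + 1) ^ 2 + 1 := by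
  -- bound the polynomial `8 * (2 P + 1)^2`
  obtain ⟨C, d, hCd⟩ := nat_poly_bound ((Polynomial.C 8) * (2 * P + 1) ^ 2)
  obtain ⟨n₀, hn₀⟩ := nat_poly_eventually_le_two_pow C d
  refine ⟨n₀, fun n hn _ => ?_⟩
  have hQ : ((Polynomial.C 8) * (2 * P + 1) ^ 2 : Polynomial ℕ).eval n
      = 8 * (2 * t n + 1) ^ 2 := by
    simp [hP n]
  have hk8 : 8 * (2 * t n + 1) ^ 2 ≤ 2 ^ n := by
    rw [← hQ]; exact le_trans (hCd n) (hn₀ n hn)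
  set k : ℕ := 2 * t n + 1 with hk
  have hk1 : 1 ≤ k := Nat.succ_le_succ (Nat.zero_le _)
  -- n ≥ 1
  have hn1 : 1 ≤ n := by
    by_contra h
    push_neg at h
    interval_cases n
    · simp at hk8
      nlinarith [hk1]
  set x : ℝ := (2 : ℝ) ^ (-(n : ℝ) / 2) with hxdef
  set y : ℝ := (2 : ℝ) ^ (-(n : ℝ)) with hydef
  have hx0 : 0 < x := Real.rpow_pos_of_pos two_pos _
  have hx1 : x ≤ 1 := by
    apply Real.rpow_le_one_of_one_le_of_nonpos one_le_two
    have : (0:ℝ) ≤ (n:ℝ) := Nat.cast_nonneg n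
    linarith
  have hy0 : 0 < y := Real.rpow_pos_of_pos two_pos _
  have hxy : x * x = y := by
    rw [hxdef, hydef, ← Real.rpow_add two_pos]
    ring_nf
  have hy1 : y < 1 := by
    apply Real.rpow_lt_one_of_one_lt_of_neg one_lt_two
    have : (1:ℝ) ≤ (n:ℝ) := by exact_mod_cast hn1
    linarith
  -- y = (2^n)⁻¹
  have hy2n : y * (2:ℝ) ^ n = 1 := by
    rw [hydef, ← Real.rpow_natCast 2 n, ← Real.rpow_add two_pos]
    simp
  -- arcsin bound
  set θ : ℝ := Real.arcsin x with hθdef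
  have hθ0 : 0 ≤ θ := Real.arcsin_nonneg.2 hx0.le
  have hθle : θ ≤ 2 * x := by
    have h1 : x ≤ Real.sin (π / 2 * x) := Real.le_sin_mul hx0.le hx1
    have h2 : θ ≤ π / 2 * x := by
      have hmono := Real.monotone_arcsin h1
      rwa [Real.arcsin_sin (by nlinarith [Real.pi_pos]) (by nlinarith [Real.pi_pos])] at hmono
    nlinarith [Real.pi_le_four, hx0.le]
  set s : ℝ := Real.sin ((k:ℝ) * θ) with hsdef
  have hkR : (1:ℝ) ≤ (k:ℝ) := by exact_mod_cast hk1
  have habs : |s| ≤ (k:ℝ) * θ := by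
    have h := Real.abs_sin_le_abs (x := (k:ℝ) * θ)
    have h2 : |(k:ℝ) * θ| = (k:ℝ) * θ := abs_of_nonneg (by positivity)
    rwa [h2] at h
  have hp_le : s ^ 2 ≤ 4 * (k:ℝ) ^ 2 * y := by
    have h1 : s ^ 2 = |s| ^ 2 := (sq_abs s).symm
    have h2 : |s| ^ 2 ≤ ((k:ℝ) * θ) ^ 2 := by
      apply pow_le_pow_left₀ (abs_nonneg s) habs
    have h3 : ((k:ℝ) * θ) ^ 2 ≤ ((k:ℝ) * (2 * x)) ^ 2 := by
      apply pow_le_pow_left₀ (by positivity)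
      exact mul_le_mul_of_nonneg_left hθle (by positivity)
    have h4 : ((k:ℝ) * (2 * x)) ^ 2 = 4 * (k:ℝ) ^ 2 * y := by
      rw [← hxy]; ring
    linarith
  -- 8 k² y ≤ 1
  have h8 : 8 * (k:ℝ) ^ 2 * y ≤ 1 := by
    have h2n : ((8 * k ^ 2 : ℕ) : ℝ) ≤ ((2 ^ n : ℕ) : ℝ) := by exact_mod_cast hk8
    push_cast at h2n
    have hkR2 : (k:ℝ) = 2 * (t n : ℝ) + 1 := by rw [hk]; push_cast; ring
    have h2n' : 8 * (k:ℝ) ^ 2 ≤ (2:ℝ) ^ n := by exact h2n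
    calc 8 * (k:ℝ) ^ 2 * y ≤ (2:ℝ) ^ n * y := mul_le_mul_of_nonneg_right h2n' hy0.le
      _ = 1 := by rw [mul_comm]; exact hy2n
  have hphalf : s ^ 2 ≤ 1 / 2 := by linarith [h8, hp_le]
  set p : ℝ := s ^ 2 with hpdef
  have hp0 : 0 ≤ p := sq_nonneg s
  have h1p : (0:ℝ) < 1 - p := by linarith
  -- log bounds
  have hlogy_neg : Real.log (1 - y) < 0 := Real.log_neg (by linarith) (by linarith)
  have hlogy_le : Real.log (1 - y) ≤ -y := by
    have := Real.log_le_sub_one_of_pos (by linarith : (0:ℝ) < 1 - y)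
    linarith
  have hlogp_ge : -2 * p ≤ Real.log (1 - p) := by
    have h1 : Real.log (1 - p)⁻¹ ≤ (1 - p)⁻¹ - 1 :=
      Real.log_le_sub_one_of_pos (by positivity)
    rw [Real.log_inv] at h1
    have h2 : (1 - p)⁻¹ ≤ 1 + 2 * p := by
      rw [inv_le_iff_one_le_mul₀ h1p]
      nlinarith [hp0, hphalf]
    linarith
  -- conclude
  rw [Nat.ceil_le]
  have hcast : ((8 * (2 * t n + 1) ^ 2 + 1 : ℕ) : ℝ) = 8 * (k:ℝ) ^ 2 + 1 := by
    push_cast [hk]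
    ring
  rw [hcast, div_le_iff_of_neg hlogy_neg]
  have hmul : (8 * (k:ℝ) ^ 2 + 1) * Real.log (1 - y) ≤ (8 * (k:ℝ) ^ 2 + 1) * (-y) :=
    mul_le_mul_of_nonneg_left hlogy_le (by positivity)
  nlinarith [hmul, hp_le, hlogp_ge, hy0.le]
end

section
/- Grover success probability formula: in the n-qubit Grover iteration with a unique marked element, after t iterations the probability of measuring the marked element is sin²((2t+1)·θ) where sin θ = 2^{−n/2}; in particular, the state after t iterations lies in the 2-dimensional real span of the uniform superposition and the marked basis state, and the amplitude on the marked state is sin((2t+1)θ). -/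
/-- The uniform superposition over all `2^n` basis states. -/
noncomputable def groverState (n : ℕ) : Fin (2 ^ n) → ℂ :=
  fun _ => ((Real.sqrt (2 ^ n))⁻¹ : ℝ)

/-- The oracle `U_f`, flipping the sign of the marked basis state `x₀`. -/
def groverOracle (n : ℕ) (x₀ : Fin (2 ^ n)) (v : Fin (2 ^ n) → ℂ) : Fin (2 ^ n) → ℂ :=
  fun x => if x = x₀ then -v x else v x

/-- The diffusion operator `D = 2|s⟩⟨s| - I` (equal to `H^{⊗n} U_g H^{⊗n}` up to sign). -/
noncomputable def groverDiffusion (n : ℕ) (v : Fin (2 ^ n) → ℂ) : Fin (2 ^ n) → ℂ :=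
  fun x => 2 * (∑ y, (starRingEnd ℂ) (groverState n y) * v y) * groverState n x - v x

lemma grover_step (n : ℕ) (x₀ : Fin (2 ^ n)) (a b : ℝ) :
    (groverDiffusion n ∘ groverOracle n x₀)
      (fun x => (a : ℂ) * groverState n x + (b : ℂ) * (if x = x₀ then 1 else 0)) =
    fun x => ((a * (1 - 4 * ((Real.sqrt (2 ^ n))⁻¹)^2) - 2 * ((Real.sqrt (2 ^ n))⁻¹) * b : ℝ) : ℂ) * groverState n x
      + ((2 * ((Real.sqrt (2 ^ n))⁻¹) * a + b : ℝ) : ℂ) * (if x = x₀ then 1 else 0) := by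
  have h2 : (0:ℝ) < 2 ^ n := by positivity
  set c : ℝ := (Real.sqrt (2 ^ n))⁻¹ with hc
  have hc2 : (c:ℂ)^2 * (2 ^ n : ℂ) = 1 := by
    have h : c^2 * (2^n : ℝ) = 1 := by
      rw [hc, inv_pow, Real.sq_sqrt h2.le]
      field_simp
    calc (c:ℂ)^2 * (2 ^ n : ℂ) = ((c^2 * (2^n:ℝ) : ℝ) : ℂ) := by push_cast; ring
    _ = 1 := by rw [h]; norm_num
  funext x
  simp only [Function.comp, groverDiffusion, groverOracle, groverState, Complex.conj_ofReal]
  have key : ∀ y : Fin (2^n),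
      (c:ℂ) * (if y = x₀ then -((a:ℂ)*(c:ℂ) + (b:ℂ)*(if y = x₀ then 1 else 0))
                else ((a:ℂ)*(c:ℂ) + (b:ℂ)*(if y = x₀ then 1 else 0)))
      = (c:ℂ)*((a:ℂ)*(c:ℂ)) + (if y = x₀ then -(c:ℂ)*(2*(a:ℂ)*(c:ℂ) + (b:ℂ)) else 0) := by
    intro y; by_cases h : y = x₀ <;> simp [h] <;> ring
  rw [Finset.sum_congr rfl (fun y _ => key y), Finset.sum_add_distrib, Finset.sum_const,
    Finset.sum_ite_eq' Finset.univ x₀]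
  simp only [Finset.mem_univ, if_true, Finset.card_univ, Fintype.card_fin, nsmul_eq_mul]
  have hcc : ((Real.sqrt (2^n) : ℝ) : ℂ)⁻¹ = (c:ℂ) := by
    rw [hc]; push_cast; ring
  by_cases h : x = x₀ <;> simp only [h, if_true, if_false] <;> push_cast <;> rw [hcc] <;>
    linear_combination (2*(a:ℂ)*(c:ℂ)) * hc2

lemma grover_iter (n : ℕ) (hn : 1 ≤ n) (x₀ : Fin (2 ^ n)) (t : ℕ) :
    (groverDiffusion n ∘ groverOracle n x₀)^[t] (groverState n) =
    fun x => ((Real.cos ((2*t+1) * Real.arcsin ((Real.sqrt (2^n))⁻¹))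
                / Real.sqrt (1 - ((Real.sqrt (2^n))⁻¹)^2) : ℝ) : ℂ) * groverState n x
      + ((Real.sin ((2*t+1) * Real.arcsin ((Real.sqrt (2^n))⁻¹))
          - Real.cos ((2*t+1) * Real.arcsin ((Real.sqrt (2^n))⁻¹)) * ((Real.sqrt (2^n))⁻¹)
            / Real.sqrt (1 - ((Real.sqrt (2^n))⁻¹)^2) : ℝ) : ℂ)
        * (if x = x₀ then 1 else 0) := by
  have h2 : (0:ℝ) < 2 ^ n := by positivity
  set c : ℝ := (Real.sqrt (2 ^ n))⁻¹ with hc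
  set θ : ℝ := Real.arcsin c with hθ
  set C : ℝ := Real.sqrt (1 - c^2) with hC
  have hs1 : (1:ℝ) < Real.sqrt (2^n) := by
    rw [show (1:ℝ) = Real.sqrt 1 by simp]
    apply Real.sqrt_lt_sqrt (by norm_num)
    have h21 : (2:ℝ)^1 ≤ 2^n := pow_le_pow_right₀ one_le_two hn
    norm_num at h21 ⊢
    linarith
  have hc0 : 0 < c := by rw [hc]; positivity
  have hc1 : c < 1 := by
    rw [hc]; exact inv_lt_one_of_one_lt₀ hs1
  have hc2' : 0 < 1 - c^2 := by nlinarith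
  have hC0 : 0 < C := Real.sqrt_pos.mpr hc2'
  have hC2 : C^2 = 1 - c^2 := Real.sq_sqrt hc2'.le
  have hsinθ : Real.sin θ = c := Real.sin_arcsin (by linarith) hc1.le
  have hcosθ : Real.cos θ = C := by rw [hθ, Real.cos_arcsin]
  induction t with
  | zero =>
    have h1 : Real.cos ((2*((0:ℕ):ℝ)+1) * θ) / C = 1 := by
      norm_num
      rw [hcosθ]; exact div_self hC0.ne'
    have h0 : Real.sin ((2*((0:ℕ):ℝ)+1) * θ)
        - Real.cos ((2*((0:ℕ):ℝ)+1) * θ) * c / C = 0 := by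
      norm_num
      rw [hsinθ, hcosθ]
      field_simp
      ring
    funext x
    simp only [Function.iterate_zero, id_eq, h1, h0]
    simp
  | succ t ih =>
    rw [Function.iterate_succ_apply', ih, grover_step]
    simp only [← hc]
    have harg : ((2*(((t:ℕ)+1:ℕ):ℝ)+1)) * θ = (2*(t:ℝ)+1)*θ + 2*θ := by push_cast; ring
    have ha : Real.cos ((2*(t:ℝ)+1)*θ)/C * (1 - 4*c^2)
        - 2*c*(Real.sin ((2*(t:ℝ)+1)*θ) - Real.cos ((2*(t:ℝ)+1)*θ)*c/C)
        = Real.cos ((2*(((t:ℕ)+1:ℕ):ℝ)+1)*θ)/C := by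
      rw [harg, Real.cos_add, Real.sin_two_mul, Real.cos_two_mul, hsinθ, hcosθ]
      field_simp
      try simp only [← hc]
      linear_combination (-2 * Real.cos ((2*(t:ℝ)+1)*θ)) * hC2
    have hb : 2*c*(Real.cos ((2*(t:ℝ)+1)*θ)/C)
        + (Real.sin ((2*(t:ℝ)+1)*θ) - Real.cos ((2*(t:ℝ)+1)*θ)*c/C)
        = Real.sin ((2*(((t:ℕ)+1:ℕ):ℝ)+1)*θ)
          - Real.cos ((2*(((t:ℕ)+1:ℕ):ℝ)+1)*θ)*c/C := by
      rw [harg, Real.cos_add, Real.sin_add, Real.sin_two_mul, Real.cos_two_mul, hsinθ, hcosθ]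
      field_simp
      try simp only [← hc]
      linear_combination (-2 * Real.sin ((2*(t:ℝ)+1)*θ) * C) * hC2
    simp only [ha, hb]

theorem grover_success_amplitude (n : ℕ) (hn : 1 ≤ n) (x₀ : Fin (2 ^ n)) (t : ℕ) :
    ((groverDiffusion n ∘ groverOracle n x₀)^[t] (groverState n)) x₀ =
      ((Real.sin ((2 * t + 1) * Real.arcsin ((Real.sqrt (2 ^ n))⁻¹)) : ℝ) : ℂ) ∧
    ∃ α β : ℝ, (groverDiffusion n ∘ groverOracle n x₀)^[t] (groverState n) =
      fun x => (α : ℂ) * groverState n x + (β : ℂ) * (if x = x₀ then 1 else 0) := by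
  rw [grover_iter n hn x₀ t]
  constructor
  · simp only [groverState, if_pos rfl, mul_one]
    push_cast
    ring
  · exact ⟨_, _, rfl⟩
end
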